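/- Let d be a positive integer and let S_1, ..., S_{d+1} be pairwise disjoint two-element sets of points in ℝ^d such that the 2(d+1) points of ⋃_{i=1}^{d+1} S_i are in general position with respect to the origin, meaning that every d-element subset of ⋃_{i=1}^{d+1} S_i is linearly independent. Then the number of colorful sets T ⊆ ⋃_{i=1}^{d+1} S_i (i.e., |T ∩ S_i| ≤ 1 for all i) such that 0 lies in the convex hull of T is even. -/

import Mathlib

open Finset

namespace OctaProof


/-! ### Affine sign helpers -/

lemma affine_root_exists (α β : ℝ) {s₁ s₂ : ℝ} (h12 : s₁ < s₂)
    (ha : 0 < α + s₁ * β) (hb : α + s₂ * β < 0) :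
    ∃ t, s₁ ≤ t ∧ t ≤ s₂ ∧ α + t * β = 0 := by
  have hβ : β < 0 := by nlinarith
  refine ⟨-α / β, ?_, ?_, ?_⟩
  · rw [le_div_iff_of_neg hβ]; nlinarith
  · rw [div_le_iff_of_neg hβ]; nlinarith
  · have hc : -α / β * β = -α := div_mul_cancel₀ (-α) hβ.ne
    linarith

lemma affine_no_zero_sign (α β : ℝ) {s₁ s₂ : ℝ} (h12 : s₁ ≤ s₂)
    (hz : ∀ t, s₁ ≤ t → t ≤ s₂ → α + t * β ≠ 0) :
    (0 < α + s₁ * β ↔ 0 < α + s₂ * β) := by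
  rcases eq_or_lt_of_le h12 with rfl | hlt
  · exact Iff.rfl
  constructor
  · intro h
    by_contra h'
    have hb : α + s₂ * β < 0 :=
      lt_of_le_of_ne (not_lt.mp h') (hz s₂ h12 le_rfl)
    obtain ⟨t, ht1, ht2, ht0⟩ := affine_root_exists α β hlt h hb
    exact hz t ht1 ht2 ht0
  · intro h
    by_contra h'
    have hb : α + s₁ * β < 0 :=
      lt_of_le_of_ne (not_lt.mp h') (hz s₁ le_rfl h12)
    obtain ⟨t, ht1, ht2, ht0⟩ :=
      affine_root_exists (-α) (-β) hlt (by nlinarith) (by nlinarith)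
    exact hz t ht1 ht2 (by nlinarith)

lemma affine_zero_flip (α β : ℝ) {s₁ t₀ s₂ : ℝ} (h1 : s₁ < t₀) (h2 : t₀ < s₂)
    (hroot : α + t₀ * β = 0) (hs₁ : α + s₁ * β ≠ 0) :
    (0 < α + s₁ * β ↔ α + s₂ * β < 0) := by
  have hβ : β ≠ 0 := by
    rintro rfl
    simp only [mul_zero, add_zero] at hroot hs₁
    exact hs₁ hroot
  have hα : α = -(t₀ * β) := by linarith
  rw [hα]
  rcases hβ.lt_or_gt with h | h
  · have l1 : 0 < -(t₀ * β) + s₁ * β := by nlinarith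
    have l2 : -(t₀ * β) + s₂ * β < 0 := by nlinarith
    exact ⟨fun _ => l2, fun _ => l1⟩
  · have l1 : -(t₀ * β) + s₁ * β < 0 := by nlinarith
    have l2 : 0 < -(t₀ * β) + s₂ * β := by nlinarith
    exact ⟨fun h' => absurd h' (not_lt.mpr l1.le), fun h' => absurd l2 (not_lt.mpr h'.le)⟩

lemma root_set_finite (a b : ℝ) (h : a ≠ 0 ∨ b ≠ 0) : {t : ℝ | a + t * b = 0}.Finite := by
  by_cases hb : b = 0
  · subst hb
    have ha : a ≠ 0 := h.resolve_right (fun h' => h' rfl)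
    convert Set.finite_empty
    ext t; simp [ha]
  · apply Set.Finite.subset (Set.finite_singleton (-a / b))
    intro t ht
    simp only [Set.mem_setOf_eq] at ht
    simp only [Set.mem_singleton_iff]
    field_simp
    linarith

lemma exists_forall_ne_zero {V : Type*} [AddCommGroup V] [Module ℝ V]
    (L : Finset (V →ₗ[ℝ] ℝ)) (hL : ∀ f ∈ L, f ≠ 0) :
    ∃ g : V, ∀ f ∈ L, f g ≠ 0 := by
  classical
  induction L using Finset.induction_on with
  | empty => exact ⟨0, fun f hf => absurd hf (by simp)⟩
  | @insert f L hfL ih =>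
    obtain ⟨g, hg⟩ := ih fun f' hf' => hL f' (mem_insert_of_mem hf')
    have hf0 : f ≠ 0 := hL f (mem_insert_self f L)
    obtain ⟨h, hh⟩ : ∃ h, f h ≠ 0 := by
      by_contra hc
      push_neg at hc
      exact hf0 (LinearMap.ext fun x => by simp [hc x])
    have hfin : ({t : ℝ | f g + t * f h = 0} ∪
        ⋃ f' ∈ L, {t : ℝ | f' g + t * f' h = 0}).Finite := by
      refine Set.Finite.union (root_set_finite _ _ (Or.inr hh)) ?_
      exact Set.Finite.biUnion L.finite_toSet fun f' hf' =>
        root_set_finite _ _ (Or.inl (hg f' hf'))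
    obtain ⟨t, ht⟩ := hfin.infinite_compl.nonempty
    simp only [Set.mem_compl_iff, Set.mem_union, Set.mem_iUnion, Set.mem_setOf_eq, not_or,
      not_exists] at ht
    refine ⟨g + t • h, fun f' hf' => ?_⟩
    have hev : f' (g + t • h) = f' g + t * f' h := by
      simp [map_add, map_smul, smul_eq_mul]
    rw [hev]
    rcases mem_insert.mp hf' with rfl | hf'
    · exact ht.1
    · exact ht.2 f' hf'


structure Octa (d : ℕ) where
  pos : 0 < d
  pt : Fin (d + 1) → Bool → (Fin d → ℝ)
  inj : ∀ {c s c' s'}, pt c s = pt c' s' → c = c' ∧ s = s'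
  li : ∀ y : Fin d → (Fin d → ℝ),
    (∀ j, ∃ c s, y j = pt c s) → Function.Injective y → LinearIndependent ℝ y

namespace Octa

variable {d : ℕ} (O : Octa d)

/-- The basis points selected by `w` among the colours `1,…,d` (i.e. `Fin.succ` colours). -/
def xsel (w : Fin d → Bool) : Fin d → Fin d → ℝ := fun j => O.pt j.succ (w j)

lemma xsel_inj (w : Fin d → Bool) : Function.Injective (O.xsel w) := fun _ _ h =>
  Fin.succ_injective _ (O.inj h).1

lemma xsel_li (w : Fin d → Bool) : LinearIndependent ℝ (O.xsel w) :=
  O.li _ (fun _ => ⟨_, _, rfl⟩) (O.xsel_inj w)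

noncomputable def bas (w : Fin d → Bool) : Module.Basis (Fin d) ℝ (Fin d → ℝ) :=
  haveI : Nonempty (Fin d) := ⟨⟨0, O.pos⟩⟩
  basisOfLinearIndependentOfCardEqFinrank (O.xsel_li w)
    (by simp [Module.finrank_fin_fun])

lemma bas_coe (w : Fin d → Bool) : ⇑(O.bas w) = O.xsel w := by
  haveI : Nonempty (Fin d) := ⟨⟨0, O.pos⟩⟩
  exact coe_basisOfLinearIndependentOfCardEqFinrank _ _

noncomputable def coord (w : Fin d → Bool) (q : Fin d → ℝ) (i : Fin d) : ℝ :=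
  (O.bas w).repr q i

lemma sum_coord_smul (w : Fin d → Bool) (q : Fin d → ℝ) :
    ∑ j, O.coord w q j • O.xsel w j = q := by
  have h := (O.bas w).sum_repr q
  rw [bas_coe] at h
  exact h

lemma coord_sum_smul (w : Fin d → Bool) (s : Finset (Fin d)) (c : Fin d → ℝ) (i : Fin d) :
    O.coord w (∑ j ∈ s, c j • O.xsel w j) i = if i ∈ s then c i else 0 := by
  unfold coord
  rw [map_sum, Finsupp.finset_sum_apply]
  simp only [map_smul, Finsupp.smul_apply, smul_eq_mul, ← O.bas_coe w, Module.Basis.repr_self,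
    Finsupp.single_apply, mul_ite, mul_one, mul_zero]
  exact Finset.sum_ite_eq' s i c

lemma expand_of_coord_zero (w : Fin d → Bool) (q : Fin d → ℝ) (i : Fin d)
    (h : O.coord w q i = 0) :
    q = ∑ j ∈ univ.erase i, O.coord w q j • O.xsel w j := by
  have h1 := O.sum_coord_smul w q
  rw [← Finset.sum_erase_add _ _ (mem_univ i), h, zero_smul, add_zero] at h1
  exact h1.symm

def Pos (w : Fin d → Bool) (q : Fin d → ℝ) : Prop := ∀ i, 0 < O.coord w q i

open Classical in
noncomputable def m (q : Fin d → ℝ) : ℕ := (univ.filter fun w => O.Pos w q).card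

lemma m_congr {qA qB : Fin d → ℝ} (h : ∀ w, O.Pos w qA ↔ O.Pos w qB) : O.m qA = O.m qB := by
  classical
  unfold m
  congr 1
  exact filter_congr fun w _ => h w

lemma gen_ne (w : Fin d → Bool) (i : Fin d) (s : Bool) :
    O.coord w (-(O.pt 0 s)) i ≠ 0 := by
  intro h
  set q := -(O.pt 0 s) with hq
  have hexp := O.expand_of_coord_zero w q i h
  set y : Fin d → (Fin d → ℝ) := Function.update (O.xsel w) i (O.pt 0 s) with hy
  have hyv : ∀ j, ∃ c s', y j = O.pt c s' := by
    intro j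
    by_cases hj : j = i
    · subst hj; exact ⟨0, s, by simp [hy]⟩
    · exact ⟨j.succ, w j, by simp [hy, Function.update_of_ne hj, xsel]⟩
  have hyinj : Function.Injective y := by
    intro j k hjk
    by_cases hj : j = i <;> by_cases hk : k = i
    · rw [hj, hk]
    · subst hj
      rw [hy] at hjk
      simp only [Function.update_self, Function.update_of_ne hk] at hjk
      exact absurd (O.inj hjk).1.symm (Fin.succ_ne_zero k)
    · subst hk
      rw [hy] at hjk
      simp only [Function.update_self, Function.update_of_ne hj] at hjk
      exact absurd (O.inj hjk).1 (Fin.succ_ne_zero j)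
    · rw [hy] at hjk
      simp only [Function.update_of_ne hj, Function.update_of_ne hk] at hjk
      exact O.xsel_inj w hjk
  have hli := O.li y hyv hyinj
  rw [Fintype.linearIndependent_iff] at hli
  have hrel : ∑ j, (fun j => if j = i then (1 : ℝ) else O.coord w q j) j • y j = 0 := by
    rw [← Finset.sum_erase_add _ _ (mem_univ i)]
    simp only [if_pos rfl]
    have h2 : ∑ j ∈ univ.erase i, (if j = i then (1 : ℝ) else O.coord w q j) • y j
        = ∑ j ∈ univ.erase i, O.coord w q j • O.xsel w j := by
      apply Finset.sum_congr rfl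
      intro j hj
      have hj' : j ≠ i := (mem_erase.mp hj).1
      rw [if_neg hj', hy, Function.update_of_ne hj']
    rw [h2, ← hexp, hy]
    simp [hq]
  have := hli _ hrel i
  simp at this


/-! ### Selections of one point of each colour, and the convex hull criterion -/

def Psel (ε : Fin (d + 1) → Bool) : Fin (d + 1) → (Fin d → ℝ) := fun c => O.pt c (ε c)

lemma Psel_inj (ε : Fin (d + 1) → Bool) : Function.Injective (O.Psel ε) := fun _ _ h =>
  (O.inj h).1

noncomputable def Tsel (ε : Fin (d + 1) → Bool) : Finset (Fin d → ℝ) := by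
  classical exact univ.image (O.Psel ε)

lemma Tsel_def (ε : Fin (d + 1) → Bool) [DecidableEq (Fin d → ℝ)] :
    O.Tsel ε = univ.image (O.Psel ε) := by
  unfold Tsel; congr!

lemma Psel_succ (ε : Fin (d + 1) → Bool) (j : Fin d) :
    O.Psel ε j.succ = O.xsel (fun k => ε k.succ) j := rfl

lemma hull_iff (ε : Fin (d + 1) → Bool) :
    (0 : Fin d → ℝ) ∈ convexHull ℝ (O.Tsel ε : Set (Fin d → ℝ)) ↔
      O.Pos (fun j => ε j.succ) (-(O.pt 0 (ε 0))) := by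
  classical
  set w : Fin d → Bool := fun j => ε j.succ with hw
  rw [O.Tsel_def ε]
  constructor
  · intro h0
    rw [Finset.convexHull_eq] at h0
    obtain ⟨W, hW0, hW1, hWc⟩ := h0
    rw [Finset.centerMass_eq_of_sum_1 _ _ hW1] at hWc
    rw [Finset.sum_image (fun c _ c' _ h => O.Psel_inj ε h)] at hW1 hWc
    set lam : Fin (d + 1) → ℝ := fun c => W (O.Psel ε c) with hlam
    have hnn : ∀ c, 0 ≤ lam c := fun c =>
      hW0 _ (mem_image_of_mem _ (mem_univ c))
    rw [Fin.sum_univ_succ] at hW1 hWc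
    simp only [id] at hWc
    have hW1' : lam 0 + ∑ i : Fin d, lam i.succ = 1 := hW1
    have hWc' : lam 0 • O.Psel ε 0 + ∑ x, lam x.succ • O.xsel w x = 0 := hWc
    have hl0 : lam 0 ≠ 0 := by
      intro hl
      rw [hl, zero_smul, zero_add] at hWc'
      have hli := O.xsel_li w
      rw [Fintype.linearIndependent_iff] at hli
      have hz := hli (fun j => lam j.succ) hWc'
      rw [hl, zero_add, Finset.sum_eq_zero (fun j _ => hz j)] at hW1'
      exact one_ne_zero hW1'.symm
    have hl0' : 0 < lam 0 := (hnn 0).lt_of_ne (Ne.symm hl0)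
    have h2 : lam 0 • O.Psel ε 0 = -∑ j, lam j.succ • O.xsel w j :=
      eq_neg_of_add_eq_zero_left hWc'
    have hq : -(O.pt 0 (ε 0)) = ∑ j, (lam j.succ / lam 0) • O.xsel w j := by
      have h3 : O.Psel ε 0 = O.pt 0 (ε 0) := rfl
      have h4 : O.pt 0 (ε 0) = (lam 0)⁻¹ • -∑ j, lam j.succ • O.xsel w j := by
        rw [← h2, h3, inv_smul_smul₀ hl0]
      rw [h4, ← smul_neg, neg_neg, Finset.smul_sum]
      exact Finset.sum_congr rfl fun j _ => by rw [smul_smul, div_eq_inv_mul]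
    intro i
    have hco : O.coord w (-(O.pt 0 (ε 0))) i = lam i.succ / lam 0 := by
      rw [hq]
      have := O.coord_sum_smul w univ (fun j => lam j.succ / lam 0) i
      simpa using this
    have hne := O.gen_ne w i (ε 0)
    rw [hco] at hne ⊢
    exact lt_of_le_of_ne (div_nonneg (hnn _) hl0'.le) (Ne.symm hne)
  · intro hpos
    set q : Fin d → ℝ := -(O.pt 0 (ε 0)) with hqdef
    set c : Fin d → ℝ := fun j => O.coord w q j with hc
    set s : ℝ := 1 + ∑ j, c j with hs
    have hcpos : ∀ j, 0 < c j := hpos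
    have hs0 : 0 < s := by
      have : (0 : ℝ) ≤ ∑ j, c j := Finset.sum_nonneg fun j _ => (hcpos j).le
      linarith
    apply mem_convexHull_of_exists_fintype
      (fun c' : Fin (d + 1) => (Fin.cases 1 (fun j => c j) c' : ℝ) / s) (O.Psel ε)
    · intro c'
      refine Fin.cases ?_ ?_ c'
      · rw [Fin.cases_zero]
        exact div_nonneg zero_le_one hs0.le
      · intro j
        rw [Fin.cases_succ]
        exact div_nonneg (hcpos j).le hs0.le
    · rw [Fin.sum_univ_succ]
      simp only [Fin.cases_zero, Fin.cases_succ]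
      rw [← Finset.sum_div, ← add_div]
      exact div_self hs0.ne'
    · intro c'
      exact Finset.mem_coe.mpr (mem_image_of_mem _ (mem_univ c'))
    · rw [Fin.sum_univ_succ]
      simp only [Fin.cases_zero, Fin.cases_succ]
      have h1 : ∀ j : Fin d, (c j / s) • O.Psel ε j.succ = s⁻¹ • (c j • O.xsel w j) := by
        intro j
        rw [O.Psel_succ ε j, smul_smul, div_eq_inv_mul]
      rw [Finset.sum_congr rfl fun j _ => h1 j, ← Finset.smul_sum, O.sum_coord_smul w q]
      have h2 : O.Psel ε 0 = O.pt 0 (ε 0) := rfl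
      rw [h2, one_div, ← smul_add]
      have h3 : O.pt 0 (ε 0) + q = 0 := by rw [hqdef]; exact add_neg_cancel _
      rw [h3, smul_zero]


/-! ### Segment machinery -/

def seg (q0 q1 : Fin d → ℝ) (t : ℝ) : Fin d → ℝ := q0 + t • (q1 - q0)

lemma seg_zero (q0 q1 : Fin d → ℝ) : seg q0 q1 0 = q0 := by simp [seg]

lemma seg_one (q0 q1 : Fin d → ℝ) : seg q0 q1 1 = q1 := by simp [seg]

lemma coord_seg (w : Fin d → Bool) (q0 q1 : Fin d → ℝ) (t : ℝ) (i : Fin d) :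
    O.coord w (seg q0 q1 t) i
      = O.coord w q0 i + t * (O.coord w q1 i - O.coord w q0 i) := by
  unfold coord seg
  simp [map_add, map_smul, map_sub, Finsupp.add_apply, Finsupp.smul_apply, Finsupp.sub_apply,
    smul_eq_mul]

open Classical in
noncomputable def roots (q0 q1 : Fin d → ℝ) : Finset ℝ :=
  image (fun p : (Fin d → Bool) × Fin d =>
    -(O.coord p.1 q0 p.2) / (O.coord p.1 q1 p.2 - O.coord p.1 q0 p.2)) univ

lemma mem_roots {q0 q1 : Fin d → ℝ} {w : Fin d → Bool} {i : Fin d} {t : ℝ}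
    (hA : O.coord w q0 i ≠ 0) (h : O.coord w (seg q0 q1 t) i = 0) :
    t ∈ O.roots q0 q1 := by
  classical
  rw [coord_seg] at h
  have hD : O.coord w q1 i - O.coord w q0 i ≠ 0 := by
    intro hD0
    rw [hD0, mul_zero, add_zero] at h
    exact hA h
  have ht : t = -(O.coord w q0 i) / (O.coord w q1 i - O.coord w q0 i) := by
    field_simp
    linarith
  unfold roots
  rw [mem_image]
  exact ⟨(w, i), mem_univ _, ht.symm⟩

lemma cross (q0 q1 : Fin d → ℝ)
    (hG2 : ∀ w i w' i' (t : ℝ), 0 < t → t < 1 →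
      O.coord w (seg q0 q1 t) i = 0 → O.coord w' (seg q0 q1 t) i' = 0 →
      i = i' ∧ ∀ j, j ≠ i → w j = w' j)
    {s₁ t₀ s₂ : ℝ} (h0 : 0 ≤ s₁) (h1 : s₁ < t₀) (h2 : t₀ < s₂) (h3 : s₂ ≤ 1)
    (honly : ∀ t, s₁ < t → t < s₂ → ∀ w i, O.coord w (seg q0 q1 t) i = 0 → t = t₀)
    (hs₁ : ∀ w i, O.coord w (seg q0 q1 s₁) i ≠ 0)
    (hs₂ : ∀ w i, O.coord w (seg q0 q1 s₂) i ≠ 0)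
    (hroot : ∃ w i, O.coord w (seg q0 q1 t₀) i = 0) :
    (O.m (seg q0 q1 s₁) : ZMod 2) = O.m (seg q0 q1 s₂) := by
  classical
  obtain ⟨w₀, i₀, hw₀⟩ := hroot
  have ht01 : 0 < t₀ := lt_of_le_of_lt h0 h1
  have ht02 : t₀ < 1 := lt_of_lt_of_le h2 h3
  set w₁ : Fin d → Bool := Function.update w₀ i₀ (!(w₀ i₀)) with hw₁def
  have hw₁ne : w₁ ≠ w₀ := by
    intro h
    have h' := congrFun h i₀
    rw [hw₁def, Function.update_self] at h'
    cases hb : w₀ i₀ <;> rw [hb] at h' <;> simp at h'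
  have hx01 : ∀ j, j ≠ i₀ → O.xsel w₁ j = O.xsel w₀ j := by
    intro j hj
    simp [xsel, hw₁def, Function.update_of_ne hj]
  -- at the crossing time, the two adjacent cones have the same coordinates
  have hcoords : ∀ i, O.coord w₁ (seg q0 q1 t₀) i = O.coord w₀ (seg q0 q1 t₀) i := by
    have hexp := O.expand_of_coord_zero w₀ (seg q0 q1 t₀) i₀ hw₀
    intro i
    have hre : seg q0 q1 t₀ = ∑ j ∈ univ.erase i₀, O.coord w₀ (seg q0 q1 t₀) j • O.xsel w₁ j := by
      conv_lhs => rw [hexp]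
      exact Finset.sum_congr rfl fun j hj => by rw [hx01 j (mem_erase.mp hj).1]
    have hcs := O.coord_sum_smul w₁ (univ.erase i₀) (fun j => O.coord w₀ (seg q0 q1 t₀) j) i
    rw [← hre] at hcs
    rw [hcs]
    by_cases hi : i = i₀
    · subst hi
      rw [if_neg (by simp), hw₀]
    · rw [if_pos (mem_erase.mpr ⟨hi, mem_univ _⟩)]
  have hq₁root : O.coord w₁ (seg q0 q1 t₀) i₀ = 0 := by rw [hcoords, hw₀]
  have hother₀ : ∀ i, i ≠ i₀ → O.coord w₀ (seg q0 q1 t₀) i ≠ 0 := by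
    intro i hi hzero
    exact hi (hG2 w₀ i w₀ i₀ t₀ ht01 ht02 hzero hw₀).1
  have hnonpair : ∀ w, (¬ ∀ j, j ≠ i₀ → w j = w₀ j) → ∀ i, O.coord w (seg q0 q1 t₀) i ≠ 0 := by
    intro w hw i hzero
    obtain ⟨hi, hag⟩ := hG2 w i w₀ i₀ t₀ ht01 ht02 hzero hw₀
    subst hi
    exact hw hag
  -- sign transfer between s and t₀
  have htrans : ∀ (w : Fin d → Bool) i (s : ℝ), s₁ ≤ s → s ≤ s₂ →
      O.coord w (seg q0 q1 s) i ≠ 0 → O.coord w (seg q0 q1 t₀) i ≠ 0 →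
      (0 < O.coord w (seg q0 q1 s) i ↔ 0 < O.coord w (seg q0 q1 t₀) i) := by
    intro w i s hss1 hss2 hne1 hne2
    have hform : ∀ t : ℝ, O.coord w (seg q0 q1 t) i
        = O.coord w q0 i + t * (O.coord w q1 i - O.coord w q0 i) := fun t =>
      O.coord_seg w q0 q1 t i
    rcases le_or_gt s t₀ with hle | hlt
    · rw [hform s, hform t₀]
      apply affine_no_zero_sign _ _ hle
      intro t ht1 ht2 hzero
      rw [← hform t] at hzero
      rcases eq_or_lt_of_le ht1 with rfl | ht1'
      · exact hne1 hzero
      · have := honly t (lt_of_le_of_lt hss1 ht1') (lt_of_le_of_lt ht2 h2) w i hzero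
        subst this
        exact hne2 hzero
    · rw [hform s, hform t₀]
      refine (affine_no_zero_sign _ _ hlt.le ?_).symm
      intro t ht1 ht2 hzero
      rw [← hform t] at hzero
      rcases eq_or_lt_of_le ht2 with rfl | ht2'
      · exact hne1 hzero
      · have := honly t (lt_of_lt_of_le (lt_of_lt_of_le h1 ht1) le_rfl)
          (lt_of_lt_of_le ht2' hss2) w i hzero
        subst this
        exact hne2 hzero
  -- membership characterisation for the two adjacent cones
  have hmemb : ∀ (w : Fin d → Bool),
      (∀ i, O.coord w (seg q0 q1 t₀) i = O.coord w₀ (seg q0 q1 t₀) i) →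
      ∀ s : ℝ, s₁ ≤ s → s ≤ s₂ → (∀ w' i', O.coord w' (seg q0 q1 s) i' ≠ 0) →
      (O.Pos w (seg q0 q1 s) ↔
        ((∀ i, i ≠ i₀ → 0 < O.coord w₀ (seg q0 q1 t₀) i) ∧
          0 < O.coord w (seg q0 q1 s) i₀)) := by
    intro w hcw s hsA hsB hsne
    constructor
    · intro h
      refine ⟨fun i hi => ?_, h i₀⟩
      have h' := (htrans w i s hsA hsB (hsne w i) (by rw [hcw i]; exact hother₀ i hi)).mp (h i)
      rwa [hcw i] at h'
    · rintro ⟨hPo, hi₀⟩ i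
      by_cases hi : i = i₀
      · subst hi; exact hi₀
      · exact (htrans w i s hsA hsB (hsne w i) (by rw [hcw i]; exact hother₀ i hi)).mpr
          (by rw [hcw i]; exact hPo i hi)
  -- flip of the distinguished coordinate
  have hflip : ∀ (w : Fin d → Bool), O.coord w (seg q0 q1 t₀) i₀ = 0 →
      ((0 < O.coord w (seg q0 q1 s₂) i₀) ↔ ¬ (0 < O.coord w (seg q0 q1 s₁) i₀)) := by
    intro w hzero
    have hform : ∀ t : ℝ, O.coord w (seg q0 q1 t) i₀
        = O.coord w q0 i₀ + t * (O.coord w q1 i₀ - O.coord w q0 i₀) := fun t =>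
      O.coord_seg w q0 q1 t i₀
    have hfl := affine_zero_flip (O.coord w q0 i₀) (O.coord w q1 i₀ - O.coord w q0 i₀)
      h1 h2 (by rw [← hform]; exact hzero) (by rw [← hform]; exact hs₁ w i₀)
    rw [← hform s₁, ← hform s₂] at hfl
    constructor
    · intro hp hq
      have := hfl.mp hq
      exact absurd hp (not_lt.mpr this.le)
    · intro hq
      rcases (hs₂ w i₀).lt_or_gt with hn | hp
      · exact absurd (hfl.mpr hn) hq
      · exact hp
  -- stability for non-adjacent cones
  have hstable : ∀ w, (¬ ∀ j, j ≠ i₀ → w j = w₀ j) →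
      (O.Pos w (seg q0 q1 s₁) ↔ O.Pos w (seg q0 q1 s₂)) := by
    intro w hw
    constructor <;> intro h <;> intro i
    · exact (htrans w i s₂ (by linarith) le_rfl (hs₂ w i) (hnonpair w hw i)).mpr
        ((htrans w i s₁ le_rfl (by linarith) (hs₁ w i) (hnonpair w hw i)).mp (h i))
    · exact (htrans w i s₁ le_rfl (by linarith) (hs₁ w i) (hnonpair w hw i)).mpr
        ((htrans w i s₂ (by linarith) le_rfl (hs₂ w i) (hnonpair w hw i)).mp (h i))
  have hclass : ∀ w : Fin d → Bool, w ≠ w₀ → w ≠ w₁ → ¬ ∀ j, j ≠ i₀ → w j = w₀ j := by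
    intro w hne0 hne1 hag
    by_cases hwi : w i₀ = w₀ i₀
    · exact hne0 (funext fun j => by
        by_cases hj : j = i₀
        · rw [hj, hwi]
        · exact hag j hj)
    · apply hne1
      funext j
      by_cases hj : j = i₀
      · subst hj
        rw [hw₁def, Function.update_self]
        have hne : w j ≠ w₀ j := hwi
        cases hb : w₀ j <;> cases hb' : w j <;>
          simp only [hb, hb', Bool.not_true, Bool.not_false] at hne ⊢ <;>
          first | rfl | exact absurd rfl hne
      · rw [hw₁def, Function.update_of_ne hj]
        exact hag j hj
  -- the final count
  have hcard : ∀ s : ℝ, (O.m (seg q0 q1 s) : ZMod 2)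
      = ∑ w : Fin d → Bool, (if O.Pos w (seg q0 q1 s) then (1 : ZMod 2) else 0) := by
    intro s
    unfold m
    rw [card_filter, Nat.cast_sum]
    exact Finset.sum_congr rfl fun w _ => by split <;> simp
  rw [hcard s₁, hcard s₂]
  rw [← Finset.sum_sdiff (Finset.subset_univ ({w₀, w₁} : Finset (Fin d → Bool)))]
  rw [← Finset.sum_sdiff (Finset.subset_univ ({w₀, w₁} : Finset (Fin d → Bool)))]
  congr 1
  · apply Finset.sum_congr rfl
    intro w hw
    rw [mem_sdiff, mem_insert, mem_singleton] at hw
    push_neg at hw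
    exact if_congr (hstable w (hclass w hw.2.1 hw.2.2)) rfl rfl
  · rw [Finset.sum_pair (Ne.symm hw₁ne), Finset.sum_pair (Ne.symm hw₁ne)]
    have hle12 : s₁ ≤ s₂ := by linarith
    have e₀s₁ := hmemb w₀ (fun i => rfl) s₁ le_rfl hle12 hs₁
    have e₀s₂ := hmemb w₀ (fun i => rfl) s₂ hle12 le_rfl hs₂
    have e₁s₁ := hmemb w₁ hcoords s₁ le_rfl hle12 hs₁
    have e₁s₂ := hmemb w₁ hcoords s₂ hle12 le_rfl hs₂
    have f₀ := hflip w₀ hw₀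
    have f₁ := hflip w₁ hq₁root
    rw [if_congr e₀s₁ rfl rfl, if_congr e₁s₁ rfl rfl, if_congr e₀s₂ rfl rfl,
      if_congr e₁s₂ rfl rfl]
    have main : ∀ (P a₀ a₁ b₀ b₁ : Prop), (b₀ ↔ ¬a₀) → (b₁ ↔ ¬a₁) →
        ((if P ∧ a₀ then (1 : ZMod 2) else 0) + (if P ∧ a₁ then 1 else 0)
          = (if P ∧ b₀ then 1 else 0) + (if P ∧ b₁ then 1 else 0)) := by
      intro P a₀ a₁ b₀ b₁ h₀ h₁
      by_cases hP : P
      · by_cases ha₀ : a₀ <;> by_cases ha₁ : a₁ <;>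
          simp [hP, ha₀, ha₁, h₀, h₁] <;> decide
      · simp [hP]
    convert main (∀ i, i ≠ i₀ → 0 < O.coord w₀ (seg q0 q1 t₀) i)
      (0 < O.coord w₀ (seg q0 q1 s₁) i₀) (0 < O.coord w₁ (seg q0 q1 s₁) i₀)
      (0 < O.coord w₀ (seg q0 q1 s₂) i₀) (0 < O.coord w₁ (seg q0 q1 s₂) i₀) f₀ f₁ using 2 <;> congr!


lemma parity_flat (q0 q1 : Fin d → ℝ) {s₁ s₂ : ℝ} (h12 : s₁ ≤ s₂)
    (hnoz : ∀ t, s₁ ≤ t → t ≤ s₂ → ∀ w i, O.coord w (seg q0 q1 t) i ≠ 0) :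
    O.m (seg q0 q1 s₁) = O.m (seg q0 q1 s₂) := by
  have hsgn : ∀ w i, (0 < O.coord w (seg q0 q1 s₁) i ↔ 0 < O.coord w (seg q0 q1 s₂) i) := by
    intro w i
    have hform : ∀ t : ℝ, O.coord w (seg q0 q1 t) i
        = O.coord w q0 i + t * (O.coord w q1 i - O.coord w q0 i) := fun t =>
      O.coord_seg w q0 q1 t i
    rw [hform s₁, hform s₂]
    apply affine_no_zero_sign _ _ h12
    intro t ht1 ht2 hzero
    exact hnoz t ht1 ht2 w i (by rw [hform t]; exact hzero)
  exact O.m_congr fun w => ⟨fun h i => (hsgn w i).mp (h i), fun h i => (hsgn w i).mpr (h i)⟩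

lemma parity_ind (q0 q1 : Fin d → ℝ) (hq0 : ∀ w i, O.coord w q0 i ≠ 0)
    (hG2 : ∀ w i w' i' (t : ℝ), 0 < t → t < 1 →
      O.coord w (seg q0 q1 t) i = 0 → O.coord w' (seg q0 q1 t) i' = 0 →
      i = i' ∧ ∀ j, j ≠ i → w j = w' j) :
    ∀ (n : ℕ) (s₁ s₂ : ℝ), 0 ≤ s₁ → s₁ < s₂ → s₂ ≤ 1 →
      (∀ w i, O.coord w (seg q0 q1 s₁) i ≠ 0) →
      (∀ w i, O.coord w (seg q0 q1 s₂) i ≠ 0) →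
      ((O.roots q0 q1).filter (fun t => s₁ < t ∧ t < s₂)).card ≤ n →
      (O.m (seg q0 q1 s₁) : ZMod 2) = O.m (seg q0 q1 s₂) := by
  classical
  intro n
  induction n with
  | zero =>
    intro s₁ s₂ h0 h12 h3 hs₁ hs₂ hcard
    have hnoz : ∀ t, s₁ ≤ t → t ≤ s₂ → ∀ w i, O.coord w (seg q0 q1 t) i ≠ 0 := by
      intro t ht1 ht2 w i hzero
      rcases eq_or_lt_of_le ht1 with rfl | ht1'
      · exact hs₁ w i hzero
      rcases eq_or_lt_of_le ht2 with rfl | ht2'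
      · exact hs₂ w i hzero
      have hmem : t ∈ (O.roots q0 q1).filter (fun t => s₁ < t ∧ t < s₂) :=
        mem_filter.mpr ⟨O.mem_roots (hq0 w i) hzero, ht1', ht2'⟩
      have := card_pos.mpr ⟨t, hmem⟩
      omega
    exact congrArg _ (O.parity_flat q0 q1 h12.le hnoz)
  | succ n ih =>
    intro s₁ s₂ h0 h12 h3 hs₁ hs₂ hcard
    by_cases hex : ∃ t, (s₁ < t ∧ t < s₂) ∧ ∃ w i, O.coord w (seg q0 q1 t) i = 0
    · set Rf := (O.roots q0 q1).filter (fun t => s₁ < t ∧ t < s₂) with hRf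
      have hRfne : Rf.Nonempty := by
        obtain ⟨t, htiv, w, i, hz⟩ := hex
        exact ⟨t, mem_filter.mpr ⟨O.mem_roots (hq0 w i) hz, htiv⟩⟩
      set t₀ := Rf.min' hRfne with ht₀
      have ht₀mem := Rf.min'_mem hRfne
      have ht₀iv : s₁ < t₀ ∧ t₀ < s₂ := (mem_filter.mp ht₀mem).2
      set R₂ := Rf.filter (fun t => t₀ < t) with hR₂
      set u : ℝ := if hne : R₂.Nonempty then R₂.min' hne else s₂ with hu
      have hu1 : t₀ < u := by
        rw [hu]; split
        · next hne => exact (mem_filter.mp (R₂.min'_mem hne)).2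
        · exact ht₀iv.2
      have hu2 : u ≤ s₂ := by
        rw [hu]; split
        · next hne => exact ((mem_filter.mp (mem_filter.mp (R₂.min'_mem hne)).1).2).2.le
        · exact le_rfl
      have hu3 : ∀ t ∈ Rf, t₀ < t → u ≤ t := by
        intro t ht htgt
        have htR : t ∈ R₂ := mem_filter.mpr ⟨ht, htgt⟩
        rw [hu]; split
        · next hne => exact R₂.min'_le t htR
        · next hne => exact absurd ⟨t, htR⟩ hne
      set s' := (t₀ + u) / 2 with hs'
      have hs'1 : t₀ < s' := by rw [hs']; linarith
      have hs'2 : s' < u := by rw [hs']; linarith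
      have hs'lo : s₁ < s' := lt_trans ht₀iv.1 hs'1
      have hs'hi : s' < s₂ := lt_of_lt_of_le hs'2 hu2
      have hs'ne : ∀ w i, O.coord w (seg q0 q1 s') i ≠ 0 := by
        intro w i hz
        have hmem : s' ∈ Rf := mem_filter.mpr ⟨O.mem_roots (hq0 w i) hz, hs'lo, hs'hi⟩
        exact absurd (hu3 s' hmem hs'1) (not_le.mpr hs'2)
      have honly : ∀ t, s₁ < t → t < s' → ∀ w i, O.coord w (seg q0 q1 t) i = 0 → t = t₀ := by
        intro t ht1 ht2 w i hz
        have hmem : t ∈ Rf :=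
          mem_filter.mpr ⟨O.mem_roots (hq0 w i) hz, ht1, lt_trans ht2 hs'hi⟩
        rcases lt_trichotomy t t₀ with h | h | h
        · exact absurd (Rf.min'_le t hmem) (not_le.mpr h)
        · exact h
        · exact absurd (hu3 t hmem h) (not_le.mpr (lt_trans ht2 hs'2))
      have hstep : (O.m (seg q0 q1 s₁) : ZMod 2) = O.m (seg q0 q1 s') := by
        by_cases hroot : ∃ w i, O.coord w (seg q0 q1 t₀) i = 0
        · exact O.cross q0 q1 hG2 h0 ht₀iv.1 hs'1 (le_trans hs'hi.le h3) honly hs₁ hs'ne hroot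
        · push_neg at hroot
          apply congrArg _ (O.parity_flat q0 q1 hs'lo.le ?_)
          intro t ht1 ht2 w i hzero
          rcases eq_or_lt_of_le ht1 with rfl | ht1'
          · exact hs₁ w i hzero
          rcases eq_or_lt_of_le ht2 with rfl | ht2'
          · exact hs'ne w i hzero
          have := honly t ht1' ht2' w i hzero
          subst this
          exact hroot w i hzero
      have hsub : ((O.roots q0 q1).filter (fun t => s' < t ∧ t < s₂)) ⊆ Rf.erase t₀ := by
        intro t ht
        rw [mem_filter] at ht
        refine mem_erase.mpr ⟨?_, mem_filter.mpr ⟨ht.1, lt_trans hs'lo ht.2.1, ht.2.2⟩⟩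
        intro heq
        rw [heq] at ht
        exact absurd ht.2.1 (not_lt.mpr hs'1.le)
      have hcard' : ((O.roots q0 q1).filter (fun t => s' < t ∧ t < s₂)).card ≤ n := by
        have h1 := card_le_card hsub
        have h2 := card_erase_of_mem ht₀mem
        have h4 : Rf.card ≤ n + 1 := hcard
        calc ((O.roots q0 q1).filter (fun t => s' < t ∧ t < s₂)).card
            ≤ (Rf.erase t₀).card := h1
          _ = Rf.card - 1 := h2
          _ ≤ (n + 1) - 1 := Nat.sub_le_sub_right h4 1
          _ = n := rfl
      have hrest := ih s' s₂ (le_of_lt (lt_of_le_of_lt h0 hs'lo)) hs'hi h3 hs'ne hs₂ hcard'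
      rw [hstep, hrest]
    · push_neg at hex
      apply congrArg _ (O.parity_flat q0 q1 h12.le ?_)
      intro t ht1 ht2 w i hzero
      rcases eq_or_lt_of_le ht1 with rfl | ht1'
      · exact hs₁ w i hzero
      rcases eq_or_lt_of_le ht2 with rfl | ht2'
      · exact hs₂ w i hzero
      exact hex t ⟨ht1', ht2'⟩ w i hzero

lemma parity_main (q0 q1 : Fin d → ℝ) (hq0 : ∀ w i, O.coord w q0 i ≠ 0)
    (hq1 : ∀ w i, O.coord w q1 i ≠ 0)
    (hG2 : ∀ w i w' i' (t : ℝ), 0 < t → t < 1 →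
      O.coord w (seg q0 q1 t) i = 0 → O.coord w' (seg q0 q1 t) i' = 0 →
      i = i' ∧ ∀ j, j ≠ i → w j = w' j) :
    (O.m q0 : ZMod 2) = O.m q1 := by
  classical
  have h := O.parity_ind q0 q1 hq0 hG2
    ((O.roots q0 q1).filter (fun t => (0:ℝ) < t ∧ t < 1)).card 0 1 le_rfl one_pos le_rfl
    (by simpa [seg_zero] using hq0) (by simpa [seg_one] using hq1) le_rfl
  simpa [seg_zero, seg_one] using h


lemma coord_xsel (w : Fin d → Bool) (j i : Fin d) :
    O.coord w (O.xsel w j) i = if j = i then 1 else 0 := by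
  unfold coord
  rw [← O.bas_coe w, Module.Basis.repr_self]
  exact Finsupp.single_apply

/-- Two coordinate functionals with distinct walls are not proportional. -/
lemma wall_ne (q : Fin d → ℝ) (hq : ∀ w i, O.coord w q i ≠ 0)
    (w w' : Fin d → Bool) (i i' : Fin d)
    (hns : ¬ (i = i' ∧ ∀ j, j ≠ i → w j = w' j)) :
    (O.coord w q i) • (O.bas w').coord i' - (O.coord w' q i') • (O.bas w).coord i ≠ 0 := by
  classical
  intro hzero
  have hprop : ∀ g, O.coord w q i * O.coord w' g i' = O.coord w' q i' * O.coord w g i := by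
    intro g
    have h := congrFun (congrArg (DFunLike.coe) hzero) g
    simp only [LinearMap.sub_apply, LinearMap.smul_apply, smul_eq_mul, Module.Basis.coord_apply,
      LinearMap.zero_apply] at h
    have h' : O.coord w q i * O.coord w' g i' - O.coord w' q i' * O.coord w g i = 0 := h
    linarith
  have hAspan : ∀ j, j ≠ i → (O.xsel w j) ∈ Submodule.span ℝ
      (((univ.erase i').image (O.xsel w') : Finset (Fin d → ℝ)) : Set (Fin d → ℝ)) := by
    intro j hj
    have hz' : O.coord w' (O.xsel w j) i' = 0 := by
      have h := hprop (O.xsel w j)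
      rw [O.coord_xsel w j i, if_neg hj, mul_zero] at h
      have h2 := mul_eq_zero.mp h
      rcases h2 with h2 | h2
      · exact absurd h2 (hq w i)
      · exact h2
    have hexp := O.expand_of_coord_zero w' (O.xsel w j) i' hz'
    rw [hexp]
    apply Submodule.sum_mem
    intro k hk'
    apply Submodule.smul_mem
    apply Submodule.subset_span
    exact Finset.mem_coe.mpr (mem_image_of_mem _ hk')
  set Afin := (univ.erase i).image (O.xsel w) with hA
  set Bfin := (univ.erase i').image (O.xsel w') with hB
  have hcardA : Afin.card = d - 1 := by
    rw [hA, card_image_of_injective _ (O.xsel_inj w), card_erase_of_mem (mem_univ i),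
      card_univ, Fintype.card_fin]
  have hcardB : Bfin.card = d - 1 := by
    rw [hB, card_image_of_injective _ (O.xsel_inj w'), card_erase_of_mem (mem_univ i'),
      card_univ, Fintype.card_fin]
  by_cases hsub : Afin ⊆ Bfin
  · have hAB : Afin = Bfin := eq_of_subset_of_card_le hsub (by rw [hcardA, hcardB])
    have hmemB : ∀ j, j ≠ i → j ≠ i' ∧ w j = w' j := by
      intro j hj
      have hmem : O.xsel w j ∈ Bfin := by
        rw [← hAB, hA]
        exact mem_image_of_mem _ (mem_erase.mpr ⟨hj, mem_univ j⟩)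
      rw [hB, mem_image] at hmem
      obtain ⟨k, hk', hkeq⟩ := hmem
      have hik := O.inj hkeq
      have hkj : k = j := Fin.succ_injective _ hik.1
      subst hkj
      exact ⟨(mem_erase.mp hk').1, hik.2.symm⟩
    have hii' : i = i' := by
      by_contra hne
      exact (hmemB i' (Ne.symm hne)).1 rfl
    exact hns ⟨hii', fun j hj => (hmemB j hj).2⟩
  · obtain ⟨p, hpA, hpB⟩ := Finset.not_subset.mp hsub
    rw [hA, mem_image] at hpA
    obtain ⟨j₀, hj₀, hpj⟩ := hpA
    have hj₀i : j₀ ≠ i := (mem_erase.mp hj₀).1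
    set y : Fin d → (Fin d → ℝ) := Function.update (O.xsel w') i' p with hy
    have hyv : ∀ k, ∃ c s', y k = O.pt c s' := by
      intro k
      by_cases hk : k = i'
      · subst hk
        exact ⟨j₀.succ, w j₀, by rw [hy, Function.update_self]; exact hpj.symm⟩
      · exact ⟨k.succ, w' k, by rw [hy, Function.update_of_ne hk]; rfl⟩
    have hyinj : Function.Injective y := by
      intro a b hab
      by_cases ha : a = i' <;> by_cases hb' : b = i'
      · rw [ha, hb']
      · exfalso
        rw [hy, ha] at hab
        rw [Function.update_self, Function.update_of_ne hb'] at hab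
        exact hpB (hab ▸ mem_image_of_mem _ (mem_erase.mpr ⟨hb', mem_univ b⟩))
      · exfalso
        rw [hy, hb'] at hab
        rw [Function.update_self, Function.update_of_ne ha] at hab
        exact hpB (hab ▸ mem_image_of_mem _ (mem_erase.mpr ⟨ha, mem_univ a⟩))
      · rw [hy, Function.update_of_ne ha, Function.update_of_ne hb'] at hab
        exact O.xsel_inj w' hab
    have hli := O.li y hyv hyinj
    have hymem : ∀ k, y k ∈ Submodule.span ℝ (Bfin : Set (Fin d → ℝ)) := by
      intro k
      by_cases hk : k = i'
      · subst hk
        rw [hy, Function.update_self, ← hpj]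
        exact hAspan j₀ hj₀i
      · rw [hy, Function.update_of_ne hk]
        exact Submodule.subset_span
          (Finset.mem_coe.mpr (mem_image_of_mem _ (mem_erase.mpr ⟨hk, mem_univ k⟩)))
    have hfr : Module.finrank ℝ (Submodule.span ℝ (Bfin : Set (Fin d → ℝ))) ≤ d - 1 := by
      have h1 : (Bfin : Set (Fin d → ℝ)).finrank ℝ ≤ Bfin.card := finrank_span_finset_le_card Bfin
      rw [hcardB] at h1
      exact h1
    have hcar : d ≤ Module.finrank ℝ (Submodule.span ℝ (Bfin : Set (Fin d → ℝ))) := by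
      have hliW : LinearIndependent ℝ
          (fun k => (⟨y k, hymem k⟩ : Submodule.span ℝ (Bfin : Set (Fin d → ℝ)))) := by
        apply LinearIndependent.of_comp (Submodule.span ℝ (Bfin : Set (Fin d → ℝ))).subtype
        exact hli
      have hcle := hliW.fintype_card_le_finrank
      simpa using hcle
    have hd := O.pos
    omega

set_option maxHeartbeats 1000000 in
/-- Existence of a point `g` which is generic and whose segments to the two endpoints
cross walls one at a time. -/
lemma exists_g : ∃ g : Fin d → ℝ, (∀ w i, O.coord w g i ≠ 0) ∧
    ∀ (s : Bool) (w : Fin d → Bool) (i : Fin d) (w' : Fin d → Bool) (i' : Fin d),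
      ¬ (i = i' ∧ ∀ j, j ≠ i → w j = w' j) →
      O.coord w (-(O.pt 0 s)) i * O.coord w' g i'
        ≠ O.coord w' (-(O.pt 0 s)) i' * O.coord w g i := by
  classical
  set L1 : Finset ((Fin d → ℝ) →ₗ[ℝ] ℝ) :=
    image (fun p : (Fin d → Bool) × Fin d => (O.bas p.1).coord p.2) univ with hL1
  set L2 : Finset ((Fin d → ℝ) →ₗ[ℝ] ℝ) :=
    image (fun p : Bool × (((Fin d → Bool) × Fin d) × ((Fin d → Bool) × Fin d)) =>
      (O.coord p.2.1.1 (-(O.pt 0 p.1)) p.2.1.2) • (O.bas p.2.2.1).coord p.2.2.2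
        - (O.coord p.2.2.1 (-(O.pt 0 p.1)) p.2.2.2) • (O.bas p.2.1.1).coord p.2.1.2)
      (univ.filter (fun p => ¬ (p.2.1.2 = p.2.2.2 ∧
        ∀ j, j ≠ p.2.1.2 → p.2.1.1 j = p.2.2.1 j))) with hL2
  have hne : ∀ f ∈ L1 ∪ L2, f ≠ 0 := by
    intro f hf
    rcases mem_union.mp hf with hf | hf
    · rw [hL1, mem_image] at hf
      obtain ⟨⟨w, i⟩, _, rfl⟩ := hf
      intro h0
      have h := congrFun (congrArg (DFunLike.coe) h0) (O.xsel w i)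
      simp only [Module.Basis.coord_apply, LinearMap.zero_apply] at h
      have h' : O.coord w (O.xsel w i) i = 0 := h
      rw [O.coord_xsel w i i, if_pos rfl] at h'
      exact one_ne_zero h'
    · rw [hL2, mem_image] at hf
      obtain ⟨⟨s, ⟨w, i⟩, ⟨w', i'⟩⟩, hmem, rfl⟩ := hf
      have hns := (mem_filter.mp hmem).2
      exact O.wall_ne (-(O.pt 0 s)) (fun w'' i'' => O.gen_ne w'' i'' s) w w' i i' hns
  obtain ⟨g, hg⟩ := exists_forall_ne_zero (L1 ∪ L2) hne
  refine ⟨g, ?_, ?_⟩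
  · intro w i
    have hmem : (O.bas w).coord i ∈ L1 ∪ L2 := by
      apply mem_union_left
      rw [hL1]
      refine mem_image.mpr ⟨(w, i), mem_univ _, rfl⟩
    have h := hg _ hmem
    intro h0
    apply h
    show (O.bas w).coord i g = 0
    rw [Module.Basis.coord_apply]
    exact h0
  · intro s w i w' i' hns heq
    have hmem : (O.coord w (-(O.pt 0 s)) i) • (O.bas w').coord i'
        - (O.coord w' (-(O.pt 0 s)) i') • (O.bas w).coord i ∈ L1 ∪ L2 := by
      apply mem_union_right
      rw [hL2]
      refine mem_image.mpr ⟨(s, ((w, i), (w', i'))), mem_filter.mpr ⟨mem_univ _, hns⟩, rfl⟩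
    apply hg _ hmem
    simp only [LinearMap.sub_apply, LinearMap.smul_apply, smul_eq_mul, Module.Basis.coord_apply]
    exact sub_eq_zero.mpr heq

/-- The mod-2 count of positive cones containing the two endpoints agree. -/
lemma m_parity : (O.m (-(O.pt 0 true)) : ZMod 2) = O.m (-(O.pt 0 false)) := by
  classical
  obtain ⟨g, hg1, hg2⟩ := O.exists_g
  have hG2 : ∀ (s : Bool) (w : Fin d → Bool) (i : Fin d) (w' : Fin d → Bool) (i' : Fin d)
      (t : ℝ), 0 < t → t < 1 →
      O.coord w (seg (-(O.pt 0 s)) g t) i = 0 → O.coord w' (seg (-(O.pt 0 s)) g t) i' = 0 →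
      i = i' ∧ ∀ j, j ≠ i → w j = w' j := by
    intro s w i w' i' t ht0 ht1 hz hz'
    by_contra hns
    apply hg2 s w i w' i' hns
    rw [O.coord_seg] at hz hz'
    set a := O.coord w (-(O.pt 0 s)) i
    set b := O.coord w g i
    set c := O.coord w' (-(O.pt 0 s)) i'
    set e := O.coord w' g i'
    have key : (1 - t) * (a * e - c * b) = 0 := by linear_combination e * hz - b * hz'
    rcases mul_eq_zero.mp key with h | h
    · exact absurd h (by intro h'; linarith)
    · linarith
  have htrue := O.parity_main (-(O.pt 0 true)) g (fun w i => O.gen_ne w i true) hg1 (hG2 true)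
  have hfalse := O.parity_main (-(O.pt 0 false)) g (fun w i => O.gen_ne w i false) hg1 (hG2 false)
  rw [htrue, hfalse]


open Classical in
/-- The number of selections whose convex hull contains the origin is even (as `ZMod 2`). -/
lemma count_even :
    (((univ.filter (fun ε : Fin (d + 1) → Bool =>
        (0 : Fin d → ℝ) ∈ convexHull ℝ (O.Tsel ε : Set (Fin d → ℝ)))).card : ℕ) : ZMod 2) = 0 := by
  classical
  have hfc : (univ.filter (fun ε : Fin (d + 1) → Bool =>
      (0 : Fin d → ℝ) ∈ convexHull ℝ (O.Tsel ε : Set (Fin d → ℝ)))).card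
      = (univ.filter (fun ε : Fin (d + 1) → Bool =>
        O.Pos (fun j => ε j.succ) (-(O.pt 0 (ε 0))))).card := by
    congr 1
    exact filter_congr fun ε _ => O.hull_iff ε
  rw [hfc, card_filter, Nat.cast_sum]
  simp only [Nat.cast_ite, Nat.cast_one, Nat.cast_zero]
  rw [← Equiv.sum_comp (Fin.consEquiv (fun _ : Fin (d + 1) => Bool))
    (fun ε : Fin (d + 1) → Bool =>
      if O.Pos (fun j => ε j.succ) (-(O.pt 0 (ε 0))) then (1 : ZMod 2) else 0)]
  rw [Fintype.sum_prod_type]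
  have hterm : ∀ (s : Bool) (w : Fin d → Bool),
      (if O.Pos (fun j => (Fin.consEquiv (fun _ : Fin (d + 1) => Bool) (s, w)) j.succ)
          (-(O.pt 0 ((Fin.consEquiv (fun _ : Fin (d + 1) => Bool) (s, w)) 0)))
        then (1 : ZMod 2) else 0)
      = (if O.Pos w (-(O.pt 0 s)) then (1 : ZMod 2) else 0) := by
    intro s w
    have h1 : (fun j : Fin d => (Fin.cons s w : ∀ _ : Fin (d + 1), Bool) j.succ) = w :=
      funext fun j => by simp
    have h2 : (Fin.cons s w : ∀ _ : Fin (d + 1), Bool) 0 = s := by simp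
    have h3 : Fin.consEquiv (fun _ : Fin (d + 1) => Bool) (s, w)
        = (Fin.cons s w : ∀ _ : Fin (d + 1), Bool) := rfl
    rw [h3, h2]
    exact if_congr (by rw [h1]) rfl rfl
  rw [Finset.sum_congr rfl (fun s _ => Finset.sum_congr rfl (fun w _ => hterm s w))]
  rw [Fintype.sum_bool]
  have hm : ∀ s : Bool,
      (∑ w : Fin d → Bool, (if O.Pos w (-(O.pt 0 s)) then (1 : ZMod 2) else 0))
        = (O.m (-(O.pt 0 s)) : ZMod 2) := by
    intro s
    unfold m
    rw [card_filter, Nat.cast_sum]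
    exact Finset.sum_congr rfl fun w _ => by split <;> simp
  rw [hm true, hm false, O.m_parity, ← two_mul, show ((2 : ZMod 2)) = 0 from rfl, zero_mul]

end Octa

end OctaProof

/-- **The Octahedron lemma.** Given `d+1` pairwise disjoint two-element sets of points in
`ℝ^d` whose union is in general position with respect to the origin (every `d` of the points
are linearly independent), the number of positively dependent colorful sets is even. -/
theorem octahedron_lemma (d : ℕ) (hd : 0 < d)
    (S : Fin (d + 1) → Finset (Fin d → ℝ))
    (hcard : ∀ i, (S i).card = 2)
    (hdisj : ∀ i j, i ≠ j → Disjoint (S i) (S j))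
    (hgen : ∀ T : Finset (Fin d → ℝ),
      (T : Set (Fin d → ℝ)) ⊆ (⋃ i, (S i : Set (Fin d → ℝ))) → T.card = d →
      LinearIndependent ℝ (fun x : T => (x : Fin d → ℝ))) :
    Even {T : Finset (Fin d → ℝ) |
      (T : Set (Fin d → ℝ)) ⊆ (⋃ i, (S i : Set (Fin d → ℝ))) ∧
      (∀ i, (T ∩ S i).card ≤ 1) ∧
      (0 : Fin d → ℝ) ∈ convexHull ℝ (T : Set (Fin d → ℝ))}.ncard := by
  classical
  open Finset OctaProof in
  -- choose the two points in each pair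
  have hpair : ∀ i, ∃ p : (Fin d → ℝ) × (Fin d → ℝ), p.1 ≠ p.2 ∧ S i = {p.1, p.2} := by
    intro i
    obtain ⟨a, b, hab, h⟩ := Finset.card_eq_two.mp (hcard i)
    exact ⟨(a, b), hab, h⟩
  choose pr hne hS using hpair
  set pt : Fin (d + 1) → Bool → (Fin d → ℝ) := fun c s => if s then (pr c).1 else (pr c).2
    with hpt
  have hptmem : ∀ c s, pt c s ∈ S c := by
    intro c s
    rw [hS c]
    cases s <;> simp [hpt]
  have hptinj : ∀ (c : Fin (d + 1)) (s : Bool) c' s', pt c s = pt c' s' → c = c' ∧ s = s' := by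
    intro c s c' s' h
    have hcc : c = c' := by
      by_contra hcc
      have hdd := hdisj c c' hcc
      exact (Finset.disjoint_left.mp hdd (hptmem c s)) (h ▸ hptmem c' s')
    subst hcc
    refine ⟨rfl, ?_⟩
    by_contra hss
    apply hne c
    cases s <;> cases s'
    · exact absurd rfl hss
    · rw [hpt] at h; simpa using h.symm
    · rw [hpt] at h; simpa using h
    · exact absurd rfl hss
  have hunion : ∀ c s, pt c s ∈ (⋃ i, (S i : Set (Fin d → ℝ))) := fun c s =>
    Set.mem_iUnion.mpr ⟨c, hptmem c s⟩
  have hli : ∀ y : Fin d → (Fin d → ℝ), (∀ j, ∃ c s, y j = pt c s) →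
      Function.Injective y → LinearIndependent ℝ y := by
    intro y hy hyinj
    set T : Finset (Fin d → ℝ) := image y univ with hT
    have hTcard : T.card = d := by
      rw [hT, card_image_of_injective _ hyinj, card_univ, Fintype.card_fin]
    have hTsub : (T : Set (Fin d → ℝ)) ⊆ ⋃ i, (S i : Set (Fin d → ℝ)) := by
      intro x hx
      rw [Finset.mem_coe, hT, mem_image] at hx
      obtain ⟨j, _, rfl⟩ := hx
      obtain ⟨c, s, hcs⟩ := hy j
      rw [hcs]
      exact hunion c s
    have hgenT := hgen T hTsub hTcard
    have hmem : ∀ j, y j ∈ T := fun j => by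
      rw [hT]; exact mem_image_of_mem _ (mem_univ j)
    have hfinj : Function.Injective (fun j => (⟨y j, hmem j⟩ : {x // x ∈ T})) := by
      intro a b hab
      exact hyinj (congrArg Subtype.val hab)
    exact hgenT.comp (fun j => (⟨y j, hmem j⟩ : {x // x ∈ T})) hfinj
  set O : OctaProof.Octa d := ⟨hd, pt, fun {c s c' s'} h => hptinj c s c' s' h, hli⟩ with hO
  have hTselinj : Function.Injective O.Tsel := by
    intro ε ε' h
    funext c
    have h1 : O.Psel ε c ∈ O.Tsel ε' := by
      rw [← h, O.Tsel_def]
      exact mem_image_of_mem _ (mem_univ c)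
    rw [O.Tsel_def, mem_image] at h1
    obtain ⟨c', _, hc'⟩ := h1
    obtain ⟨hcc, hss⟩ := O.inj hc'
    subst hcc
    exact hss.symm
  have hset : {T : Finset (Fin d → ℝ) |
      (T : Set (Fin d → ℝ)) ⊆ (⋃ i, (S i : Set (Fin d → ℝ))) ∧
      (∀ i, (T ∩ S i).card ≤ 1) ∧
      (0 : Fin d → ℝ) ∈ convexHull ℝ (T : Set (Fin d → ℝ))}
      = O.Tsel '' {ε : Fin (d + 1) → Bool |
          (0 : Fin d → ℝ) ∈ convexHull ℝ (O.Tsel ε : Set (Fin d → ℝ))} := by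
    ext T
    simp only [Set.mem_setOf_eq, Set.mem_image]
    constructor
    · rintro ⟨hsub, hcap, hhull⟩
      have hTbig : ¬ T.card ≤ d := by
        intro hle
        set U : Finset (Fin d → ℝ) := univ.biUnion S with hU
        have hTU : T ⊆ U := by
          intro x hx
          obtain ⟨i, hi⟩ := Set.mem_iUnion.mp (hsub (Finset.mem_coe.mpr hx))
          exact mem_biUnion.mpr ⟨i, mem_univ i, hi⟩
        have hUcard : d ≤ U.card := by
          have h1 : U.card = ∑ i, (S i).card := card_biUnion (fun i _ j _ hij => hdisj i j hij)
          have h2 : ∑ i : Fin (d + 1), (S i).card = ∑ _i : Fin (d + 1), 2 :=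
            Finset.sum_congr rfl fun i _ => hcard i
          rw [h1, h2, Finset.sum_const, card_univ, Fintype.card_fin, smul_eq_mul]
          omega
        obtain ⟨T', hTT', hT'U, hT'card⟩ := Finset.exists_subsuperset_card_eq hTU hle hUcard
        have hT'sub : (T' : Set (Fin d → ℝ)) ⊆ ⋃ i, (S i : Set (Fin d → ℝ)) := by
          intro x hx
          obtain ⟨i, _, hi⟩ := mem_biUnion.mp (hT'U (Finset.mem_coe.mp hx))
          exact Set.mem_iUnion.mpr ⟨i, hi⟩
        have hgenT' := hgen T' hT'sub hT'card
        have hhull' : (0 : Fin d → ℝ) ∈ convexHull ℝ (T' : Set (Fin d → ℝ)) :=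
          convexHull_mono (Finset.coe_subset.mpr hTT') hhull
        rw [Finset.convexHull_eq] at hhull'
        obtain ⟨W, hW0, hW1, hWc⟩ := hhull'
        rw [Finset.centerMass_eq_of_sum_1 _ _ hW1] at hWc
        rw [linearIndependent_iff'] at hgenT'
        have hzero : ∀ y ∈ T'.attach, W y.val = 0 := by
          apply hgenT' T'.attach (fun y => W y.val)
          rw [Finset.sum_attach T' (fun x => W x • x)]
          simpa using hWc
        have hzsum : ∑ y ∈ T', W y = 0 := by
          rw [← Finset.sum_attach T' W]
          exact Finset.sum_eq_zero hzero
        exact one_ne_zero (hW1.symm.trans hzsum)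
      have hsum : T.card ≤ ∑ i, (T ∩ S i).card := by
        have hTsub2 : T ⊆ univ.biUnion (fun i => T ∩ S i) := by
          intro x hx
          obtain ⟨i, hi⟩ := Set.mem_iUnion.mp (hsub (Finset.mem_coe.mpr hx))
          exact mem_biUnion.mpr ⟨i, mem_univ i, mem_inter.mpr ⟨hx, hi⟩⟩
        calc T.card ≤ (univ.biUnion fun i => T ∩ S i).card := card_le_card hTsub2
          _ ≤ ∑ i, (T ∩ S i).card := card_biUnion_le
      have hone : ∀ i, (T ∩ S i).card = 1 := by
        by_contra hc
        push_neg at hc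
        obtain ⟨i₀, hi₀⟩ := hc
        have hi₀' : (T ∩ S i₀).card = 0 := by
          have := hcap i₀
          omega
        have hle : ∑ i, (T ∩ S i).card ≤ d := by
          rw [← Finset.sum_erase_add _ _ (mem_univ i₀), hi₀', add_zero]
          calc ∑ i ∈ univ.erase i₀, (T ∩ S i).card ≤ ∑ _i ∈ univ.erase i₀, 1 :=
              Finset.sum_le_sum fun i _ => hcap i
            _ = d := by
              rw [Finset.sum_const, card_erase_of_mem (mem_univ i₀), card_univ,
                Fintype.card_fin, smul_eq_mul, mul_one]
              omega
        omega
      have hy' : ∀ i, ∃ y, T ∩ S i = {y} := fun i => card_eq_one.mp (hone i)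
      choose y hy using hy'
      have hyTS : ∀ i, y i ∈ T ∩ S i := fun i => by
        rw [hy i]; exact mem_singleton_self _
      have hyT : ∀ i, y i ∈ T := fun i => (mem_inter.mp (hyTS i)).1
      have hyS : ∀ i, y i ∈ S i := fun i => (mem_inter.mp (hyTS i)).2
      set ε : Fin (d + 1) → Bool := fun i => decide (y i = (pr i).1) with hε
      have hPy : ∀ i, O.Psel ε i = y i := by
        intro i
        have hySi := hyS i
        rw [hS i, mem_insert, mem_singleton] at hySi
        show pt i (ε i) = y i
        by_cases haa : y i = (pr i).1
        · simp [hpt, hε, haa]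
        · have hbb : y i = (pr i).2 := hySi.resolve_left haa
          simp [hpt, hε, haa, hbb]
          exact fun h => h.symm
      have hTeq : O.Tsel ε = T := by
        apply Finset.Subset.antisymm
        · intro x hx
          rw [O.Tsel_def, mem_image] at hx
          obtain ⟨c, _, rfl⟩ := hx
          rw [hPy c]
          exact hyT c
        · intro x hx
          obtain ⟨i, hi⟩ := Set.mem_iUnion.mp (hsub (Finset.mem_coe.mpr hx))
          have hxi : x ∈ T ∩ S i := mem_inter.mpr ⟨hx, hi⟩
          rw [hy i, mem_singleton] at hxi
          rw [O.Tsel_def, mem_image]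
          exact ⟨i, mem_univ i, by rw [hPy i, ← hxi]⟩
      exact ⟨ε, by rw [hTeq]; exact hhull, hTeq⟩
    · rintro ⟨ε, hhull, rfl⟩
      refine ⟨?_, ?_, hhull⟩
      · intro x hx
        rw [Finset.mem_coe, O.Tsel_def, mem_image] at hx
        obtain ⟨c, _, rfl⟩ := hx
        exact hunion c (ε c)
      · intro i
        apply card_le_one.mpr
        intro a ha b hb
        rw [mem_inter] at ha hb
        obtain ⟨ha1, ha2⟩ := ha
        obtain ⟨hb1, hb2⟩ := hb
        rw [O.Tsel_def, mem_image] at ha1 hb1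
        obtain ⟨c, _, rfl⟩ := ha1
        obtain ⟨c', _, rfl⟩ := hb1
        have hci : c = i := by
          by_contra hci
          exact (Finset.disjoint_left.mp (hdisj c i hci) (hptmem c (ε c))) ha2
        have hc'i : c' = i := by
          by_contra hci
          exact (Finset.disjoint_left.mp (hdisj c' i hci) (hptmem c' (ε c'))) hb2
        rw [hci, hc'i]
  rw [hset, Set.ncard_image_of_injective _ hTselinj]
  have hn : {ε : Fin (d + 1) → Bool |
      (0 : Fin d → ℝ) ∈ convexHull ℝ (O.Tsel ε : Set (Fin d → ℝ))}.ncard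
      = (univ.filter (fun ε : Fin (d + 1) → Bool =>
        (0 : Fin d → ℝ) ∈ convexHull ℝ (O.Tsel ε : Set (Fin d → ℝ)))).card := by
    rw [← Set.ncard_coe_finset]
    congr 1
    ext ε
    simp
  rw [hn, even_iff_two_dvd, ← ZMod.natCast_eq_zero_iff]
  exact O.count_even
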